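/- Let π be a bounded probability density on ℝ that is continuous and strictly positive at a point θ₀. For ε ~ N(0,1) and n ≥ 1 set X_n = θ₀ + ε/√n, and let μ_n be the posterior probability measure on ℝ with Lebesgue density θ ↦ exp(−n(θ − X_n)²/2) π(θ) / ∫_ℝ exp(−n(u − X_n)²/2) π(u) du. Then the total variation distance between the image of μ_n under the map θ ↦ √n (θ − X_n) and the standard normal distribution N(0,1) converges to 0 in probability as n → ∞. -/

import Mathlib

open MeasureTheory ProbabilityTheory

/-- Total variation distance between two Borel measures on `ℝ`:
the supremum over Borel sets `B` of `|μ(B) − ν(B)|`. -/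
noncomputable def tvDist (μ ν : Measure ℝ) : ℝ :=
  ⨆ B : { s : Set ℝ // MeasurableSet s }, |(μ B).toReal - (ν B).toReal|

/-- The posterior measure on `ℝ` in the model `x | θ ~ N(θ, 1/n)` with prior
Lebesgue density `π`, given an observation `x`. -/
noncomputable def posterior (π : ℝ → ℝ) (n : ℕ) (x : ℝ) : Measure ℝ :=
  volume.withDensity fun θ => ENNReal.ofReal
    (Real.exp (-(n : ℝ) * (θ - x) ^ 2 / 2) * π θ /
      ∫ u : ℝ, Real.exp (-(n : ℝ) * (u - x) ^ 2 / 2) * π u)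

section BvMAux

open Filter

/-- The normalizing constant of the rescaled posterior. -/
noncomputable def bvmW (pr : ℝ → ℝ) (θ₀ : ℝ) (n : ℕ) (ε : ℝ) : ℝ :=
  ∫ s : ℝ, Real.exp (-s ^ 2 / 2) * pr (θ₀ + (ε + s) / Real.sqrt n)

/-- The density of the rescaled posterior. -/
noncomputable def bvmG (pr : ℝ → ℝ) (θ₀ : ℝ) (n : ℕ) (ε : ℝ) (s : ℝ) : ℝ :=
  Real.exp (-s ^ 2 / 2) * pr (θ₀ + (ε + s) / Real.sqrt n) / bvmW pr θ₀ n ε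

/-- The `L¹` distance between the rescaled posterior density and the normal density. -/
noncomputable def bvmD (pr : ℝ → ℝ) (θ₀ : ℝ) (n : ℕ) (ε : ℝ) : ℝ :=
  ∫ s : ℝ, |bvmG pr θ₀ n ε s - gaussianPDFReal 0 1 s|

variable {pr : ℝ → ℝ} {θ₀ Cb : ℝ}

private lemma bvm_exp_eq :
    (fun s : ℝ => Real.exp (-s ^ 2 / 2)) = fun s => Real.exp (-(1/2 : ℝ) * s ^ 2) := by
  funext s; congr 1; ring

private lemma bvm_e_int : Integrable (fun s : ℝ => Real.exp (-s ^ 2 / 2)) := by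
  rw [bvm_exp_eq]; exact integrable_exp_neg_mul_sq (by norm_num)

private lemma bvm_e_integral :
    (∫ s : ℝ, Real.exp (-s ^ 2 / 2)) = Real.sqrt (2 * Real.pi) := by
  rw [bvm_exp_eq, integral_gaussian]; congr 1; ring

private lemma bvm_gauss_eq (s : ℝ) :
    gaussianPDFReal 0 1 s = Real.exp (-s ^ 2 / 2) / Real.sqrt (2 * Real.pi) := by
  rw [gaussianPDFReal]
  simp only [NNReal.coe_one, mul_one, sub_zero, one_div]
  rw [inv_mul_eq_div]

private lemma bvm_num_int (hm : Measurable pr) (h0 : ∀ x, 0 ≤ pr x) (hb : ∀ x, pr x ≤ Cb)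
    {F : ℝ → ℝ} (hF : Measurable F) :
    Integrable fun s : ℝ => Real.exp (-s ^ 2 / 2) * pr (F s) := by
  refine (bvm_e_int.const_mul Cb).mono' ?_ ?_
  · exact ((Real.measurable_exp.comp ((measurable_id.pow_const 2).neg.div_const 2)).mul
      (hm.comp hF)).aestronglyMeasurable
  · refine ae_of_all _ fun s => ?_
    rw [Real.norm_eq_abs, abs_of_nonneg (mul_nonneg (Real.exp_pos _).le (h0 _))]
    calc Real.exp (-s ^ 2 / 2) * pr (F s) ≤ Real.exp (-s ^ 2 / 2) * Cb :=
          mul_le_mul_of_nonneg_left (hb _) (Real.exp_pos _).le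
      _ = Cb * Real.exp (-s ^ 2 / 2) := mul_comm _ _

private lemma bvm_W_nonneg (h0 : ∀ x, 0 ≤ pr x) (n : ℕ) (ε : ℝ) : 0 ≤ bvmW pr θ₀ n ε :=
  integral_nonneg fun s => mul_nonneg (Real.exp_pos _).le (h0 _)

private lemma bvm_G_nonneg (h0 : ∀ x, 0 ≤ pr x) (n : ℕ) (ε s : ℝ) : 0 ≤ bvmG pr θ₀ n ε s :=
  div_nonneg (mul_nonneg (Real.exp_pos _).le (h0 _)) (bvm_W_nonneg h0 n ε)

private lemma bvm_W_pos (hm : Measurable pr) (h0 : ∀ x, 0 ≤ pr x) (hb : ∀ x, pr x ≤ Cb)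
    (hc : ContinuousAt pr θ₀) (hp : 0 < pr θ₀) {n : ℕ} (hn : 1 ≤ n) (ε : ℝ) :
    0 < bvmW pr θ₀ n ε := by
  have hc0 : 0 < Real.sqrt n := Real.sqrt_pos.2 (by exact_mod_cast hn)
  obtain ⟨δ, hδ, hδ'⟩ : ∃ δ > 0, ∀ θ : ℝ, |θ - θ₀| < δ → 0 < pr θ := by
    obtain ⟨δ, hδ, h⟩ := Metric.continuousAt_iff.mp hc (pr θ₀) hp
    exact ⟨δ, hδ, fun θ hθ => by
      have h2 := h (show dist θ θ₀ < δ by rwa [Real.dist_eq])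
      rw [Real.dist_eq] at h2
      have := (abs_lt.mp h2).1
      linarith⟩
  rw [bvmW, integral_pos_iff_support_of_nonneg
    (fun s => mul_nonneg (Real.exp_pos _).le (h0 _)) (bvm_num_int hm h0 hb (by fun_prop))]
  have hsub : Set.Ioo (-ε - δ * Real.sqrt n) (-ε + δ * Real.sqrt n) ⊆
      Function.support fun s => Real.exp (-s ^ 2 / 2) * pr (θ₀ + (ε + s) / Real.sqrt n) := by
    intro s hs
    have habs : |ε + s| < δ * Real.sqrt n := by
      rw [abs_lt]; constructor <;> [linarith [hs.1]; linarith [hs.2]]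
    have harg : |θ₀ + (ε + s) / Real.sqrt n - θ₀| < δ := by
      rw [add_sub_cancel_left, abs_div, abs_of_pos hc0, div_lt_iff₀ hc0]
      exact habs
    exact (mul_pos (Real.exp_pos _) (hδ' _ harg)).ne'
  refine lt_of_lt_of_le ?_ (measure_mono hsub)
  rw [Real.volume_Ioo]
  have h3 : (0:ℝ) < (-ε + δ * Real.sqrt n) - (-ε - δ * Real.sqrt n) := by
    have := mul_pos hδ hc0; linarith
  simpa using ENNReal.ofReal_pos.mpr h3

private lemma bvm_W_eq {n : ℕ} (hn : 1 ≤ n) (ε : ℝ) :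
    bvmW pr θ₀ n ε = Real.sqrt n *
      ∫ u : ℝ, Real.exp (-(n : ℝ) * (u - (θ₀ + ε / Real.sqrt n)) ^ 2 / 2) * pr u := by
  have hc0 : 0 < Real.sqrt n := Real.sqrt_pos.2 (by exact_mod_cast hn)
  set c : ℝ := Real.sqrt n with hc
  set x : ℝ := θ₀ + ε / c with hx
  set G : ℝ → ℝ := fun u => Real.exp (-(n : ℝ) * (u - x) ^ 2 / 2) * pr u with hG
  have hc2 : c ^ 2 = (n : ℝ) := Real.sq_sqrt (Nat.cast_nonneg n)
  have hn0 : (n : ℝ) ≠ 0 := by positivity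
  have h1 : ∀ s : ℝ, Real.exp (-s ^ 2 / 2) * pr (θ₀ + (ε + s) / c) = G (x + s * c⁻¹) := by
    intro s
    have harg : x + s * c⁻¹ = θ₀ + (ε + s) / c := by
      rw [hx]; field_simp; ring
    have hdiff : x + s * c⁻¹ - x = s / c := by field_simp; ring
    have hexp : -(n : ℝ) * (s / c) ^ 2 / 2 = -s ^ 2 / 2 := by
      rw [div_pow, hc2]; field_simp
    rw [hG]
    simp only []
    rw [hdiff, harg, hexp]
  calc bvmW pr θ₀ n ε = ∫ s : ℝ, G (x + s * c⁻¹) := by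
        rw [bvmW]; exact integral_congr_ae (ae_of_all _ h1)
    _ = |c| • ∫ t : ℝ, G (x + t) :=
        MeasureTheory.Measure.integral_comp_inv_mul_right (fun t => G (x + t)) c
    _ = c * ∫ u : ℝ, G u := by
        rw [MeasureTheory.integral_add_left_eq_self G x, abs_of_pos hc0, smul_eq_mul]


private lemma bvm_num_meas (hm : Measurable pr) (n : ℕ) (ε : ℝ) :
    Measurable fun s : ℝ => Real.exp (-s ^ 2 / 2) * pr (θ₀ + (ε + s) / Real.sqrt n) :=
  (Real.measurable_exp.comp ((measurable_id.pow_const 2).neg.div_const 2)).mul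
    (hm.comp (by fun_prop))

private lemma bvm_G_meas (hm : Measurable pr) (n : ℕ) (ε : ℝ) :
    Measurable (bvmG pr θ₀ n ε) :=
  (bvm_num_meas hm n ε).div_const _

private lemma bvm_map_apply (hm : Measurable pr) {n : ℕ} (hn : 1 ≤ n) (ε : ℝ)
    {B : Set ℝ} (hB : MeasurableSet B) :
    Measure.map (fun θ => Real.sqrt n * (θ - (θ₀ + ε / Real.sqrt n)))
      (posterior pr n (θ₀ + ε / Real.sqrt n)) B
      = ∫⁻ s in B, ENNReal.ofReal (bvmG pr θ₀ n ε s) := by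
  have hc0 : 0 < Real.sqrt n := Real.sqrt_pos.2 (by exact_mod_cast hn)
  set c : ℝ := Real.sqrt n with hc
  set x : ℝ := θ₀ + ε / c with hx
  set T : ℝ → ℝ := fun θ => c * (θ - x) with hT
  have hc2 : c ^ 2 = (n : ℝ) := Real.sq_sqrt (Nat.cast_nonneg n)
  have hTm : Measurable T := by fun_prop
  have hgms : Measurable (bvmG pr θ₀ n ε) := bvm_G_meas hm n ε
  have hψ : Measurable fun s => ENNReal.ofReal (bvmG pr θ₀ n ε s) :=
    ENNReal.measurable_ofReal.comp hgms
  have hmapT : Measure.map T volume = ENNReal.ofReal |c⁻¹| • volume := by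
    have hTcomp : T = (fun y : ℝ => y + -(c * x)) ∘ (fun θ : ℝ => c * θ) := by
      funext θ; simp only [hT, Function.comp_apply]; ring
    rw [hTcomp, ← Measure.map_map (measurable_add_const _) (measurable_const_mul c),
      Real.map_volume_mul_left hc0.ne', Measure.map_smul, map_add_right_eq_self]
  have h1 := setLIntegral_map (μ := volume) hB hψ hTm
  rw [hmapT, Measure.restrict_smul, lintegral_smul_measure] at h1
  have hone : ENNReal.ofReal c * ENNReal.ofReal |c⁻¹| = 1 := by
    rw [abs_of_pos (inv_pos.2 hc0), ← ENNReal.ofReal_mul hc0.le, mul_inv_cancel₀ hc0.ne',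
      ENNReal.ofReal_one]
  have key : (∫⁻ s in B, ENNReal.ofReal (bvmG pr θ₀ n ε s))
      = ENNReal.ofReal c * ∫⁻ θ in T ⁻¹' B, ENNReal.ofReal (bvmG pr θ₀ n ε (T θ)) := by
    rw [← h1, smul_eq_mul, ← mul_assoc, hone, one_mul]
  have hψT : Measurable fun θ => ENNReal.ofReal (bvmG pr θ₀ n ε (T θ)) := hψ.comp hTm
  rw [Measure.map_apply hTm hB, _root_.posterior, withDensity_apply _ (hTm hB), key,
    ← lintegral_const_mul _ hψT]
  refine setLIntegral_congr_fun (hTm hB) (fun θ _ => ?_)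
  have hWZ : bvmW pr θ₀ n ε
      = c * ∫ u : ℝ, Real.exp (-(n : ℝ) * (u - x) ^ 2 / 2) * pr u := bvm_W_eq hn ε
  have harg : θ₀ + (ε + c * (θ - x)) / c = θ := by
    rw [hx]; field_simp; ring
  have hexp : -(c * (θ - x)) ^ 2 / 2 = -(n : ℝ) * (θ - x) ^ 2 / 2 := by
    rw [mul_pow, hc2]; ring
  have hgT : bvmG pr θ₀ n ε (T θ)
      = Real.exp (-(n : ℝ) * (θ - x) ^ 2 / 2) * pr θ
        / (c * ∫ u : ℝ, Real.exp (-(n : ℝ) * (u - x) ^ 2 / 2) * pr u) := by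
    rw [bvmG, hWZ, hT]
    simp only []
    rw [harg, hexp]
  rw [hgT, ← ENNReal.ofReal_mul hc0.le, mul_div_assoc', mul_div_mul_left _ _ hc0.ne']


private lemma bvm_G_int (hm : Measurable pr) (h0 : ∀ x, 0 ≤ pr x) (hb : ∀ x, pr x ≤ Cb)
    (n : ℕ) (ε : ℝ) : Integrable (bvmG pr θ₀ n ε) := by
  have h := (bvm_num_int hm h0 hb (F := fun s => θ₀ + (ε + s) / Real.sqrt n)
    (by fun_prop)).div_const (bvmW pr θ₀ n ε)
  exact h

private lemma bvm_tv_le (hm : Measurable pr) (h0 : ∀ x, 0 ≤ pr x) (hb : ∀ x, pr x ≤ Cb)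
    {n : ℕ} (hn : 1 ≤ n) (ε : ℝ) :
    tvDist (Measure.map (fun θ => Real.sqrt n * (θ - (θ₀ + ε / Real.sqrt n)))
      (posterior pr n (θ₀ + ε / Real.sqrt n))) (gaussianReal 0 1) ≤ bvmD pr θ₀ n ε := by
  haveI : Nonempty { s : Set ℝ // MeasurableSet s } := ⟨⟨∅, MeasurableSet.empty⟩⟩
  refine ciSup_le fun Bs => ?_
  obtain ⟨B, hB⟩ := Bs
  have hφ_int := integrable_gaussianPDFReal 0 1
  have hg_int : Integrable (bvmG pr θ₀ n ε) := bvm_G_int hm h0 hb n ε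
  have hg0 : ∀ s, 0 ≤ bvmG pr θ₀ n ε s := bvm_G_nonneg h0 n ε
  show |(Measure.map _ _ B).toReal - (gaussianReal 0 1 B).toReal| ≤ _
  rw [bvm_map_apply hm hn ε hB, gaussianReal_apply_eq_integral 0 one_ne_zero B,
    ← ofReal_integral_eq_lintegral_ofReal hg_int.restrict (ae_of_all _ fun s => hg0 s),
    ENNReal.toReal_ofReal (setIntegral_nonneg hB fun s _ => hg0 s),
    ENNReal.toReal_ofReal (setIntegral_nonneg hB fun s _ => gaussianPDFReal_nonneg 0 1 s),
    ← integral_sub hg_int.restrict hφ_int.restrict]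
  calc |∫ s in B, (bvmG pr θ₀ n ε s - gaussianPDFReal 0 1 s)|
      ≤ ∫ s in B, |bvmG pr θ₀ n ε s - gaussianPDFReal 0 1 s| := by
        simpa [Real.norm_eq_abs] using norm_integral_le_integral_norm
          (μ := volume.restrict B) (fun s => bvmG pr θ₀ n ε s - gaussianPDFReal 0 1 s)
    _ ≤ ∫ s, |bvmG pr θ₀ n ε s - gaussianPDFReal 0 1 s| :=
        setIntegral_le_integral ((hg_int.sub hφ_int).abs) (ae_of_all _ fun s => abs_nonneg _)
    _ = bvmD pr θ₀ n ε := rfl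


private lemma bvm_D_meas (hm : Measurable pr) (n : ℕ) :
    Measurable (fun ε => bvmD pr θ₀ n ε) := by
  have h1 : Measurable (fun p : ℝ × ℝ =>
      Real.exp (-p.2 ^ 2 / 2) * pr (θ₀ + (p.1 + p.2) / Real.sqrt n)) := by
    exact (Real.measurable_exp.comp
      ((measurable_snd.pow_const 2).neg.div_const 2)).mul (hm.comp (by fun_prop))
  have hW : Measurable (bvmW pr θ₀ n) :=
    h1.stronglyMeasurable.integral_prod_right'.measurable
  have h2 : Measurable (fun p : ℝ × ℝ =>
      |bvmG pr θ₀ n p.1 p.2 - gaussianPDFReal 0 1 p.2|) := by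
    have : Measurable (fun p : ℝ × ℝ => bvmG pr θ₀ n p.1 p.2) :=
      h1.div (hW.comp measurable_fst)
    exact (this.sub ((measurable_gaussianPDFReal 0 1).comp measurable_snd)).abs
  exact h2.stronglyMeasurable.integral_prod_right'.measurable

private lemma bvm_sqrt_tendsto :
    Filter.Tendsto (fun n : ℕ => Real.sqrt n) Filter.atTop Filter.atTop := by
  have h2 : Filter.Tendsto Real.sqrt Filter.atTop Filter.atTop := by
    rw [show Real.sqrt = fun x : ℝ => x ^ (1/2 : ℝ) from funext Real.sqrt_eq_rpow]
    exact tendsto_rpow_atTop (by norm_num)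
  exact h2.comp tendsto_natCast_atTop_atTop

private lemma bvm_arg_tendsto (ε s : ℝ) :
    Filter.Tendsto (fun n : ℕ => θ₀ + (ε + s) / Real.sqrt n) Filter.atTop (nhds θ₀) := by
  have h1 : Filter.Tendsto (fun n : ℕ => (ε + s) / Real.sqrt n) Filter.atTop (nhds 0) := by
    simp only [div_eq_mul_inv]
    simpa using (bvm_sqrt_tendsto.inv_tendsto_atTop).const_mul (ε + s)
  simpa using (tendsto_const_nhds (x := θ₀)).add h1

private lemma bvm_W_tendsto (hm : Measurable pr) (h0 : ∀ x, 0 ≤ pr x) (hb : ∀ x, pr x ≤ Cb)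
    (hc : ContinuousAt pr θ₀) (ε : ℝ) :
    Filter.Tendsto (fun n : ℕ => bvmW pr θ₀ n ε) Filter.atTop
      (nhds (Real.sqrt (2 * Real.pi) * pr θ₀)) := by
  have hval : (∫ s : ℝ, Real.exp (-s ^ 2 / 2) * pr θ₀) = Real.sqrt (2 * Real.pi) * pr θ₀ := by
    rw [integral_mul_const, bvm_e_integral]
  rw [← hval]
  refine tendsto_integral_filter_of_dominated_convergence
    (fun s => Cb * Real.exp (-s ^ 2 / 2)) ?_ ?_ ?_ ?_
  · exact Filter.Eventually.of_forall fun n =>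
      (bvm_num_meas hm n ε).aestronglyMeasurable
  · refine Filter.Eventually.of_forall fun n => ae_of_all _ fun s => ?_
    rw [Real.norm_eq_abs, abs_of_nonneg (mul_nonneg (Real.exp_pos _).le (h0 _))]
    calc Real.exp (-s ^ 2 / 2) * pr (θ₀ + (ε + s) / Real.sqrt n)
        ≤ Real.exp (-s ^ 2 / 2) * Cb := mul_le_mul_of_nonneg_left (hb _) (Real.exp_pos _).le
      _ = Cb * Real.exp (-s ^ 2 / 2) := mul_comm _ _
  · exact bvm_e_int.const_mul Cb
  · exact ae_of_all _ fun s =>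
      tendsto_const_nhds.mul (hc.tendsto.comp (bvm_arg_tendsto ε s))

private lemma bvm_G_tendsto (hm : Measurable pr) (h0 : ∀ x, 0 ≤ pr x) (hb : ∀ x, pr x ≤ Cb)
    (hc : ContinuousAt pr θ₀) (hp : 0 < pr θ₀) (ε s : ℝ) :
    Filter.Tendsto (fun n : ℕ => bvmG pr θ₀ n ε s) Filter.atTop
      (nhds (gaussianPDFReal 0 1 s)) := by
  have hL : (0:ℝ) < Real.sqrt (2 * Real.pi) * pr θ₀ :=
    mul_pos (Real.sqrt_pos.2 (by positivity)) hp
  have hnum : Filter.Tendsto (fun n : ℕ =>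
      Real.exp (-s ^ 2 / 2) * pr (θ₀ + (ε + s) / Real.sqrt n)) Filter.atTop
      (nhds (Real.exp (-s ^ 2 / 2) * pr θ₀)) :=
    tendsto_const_nhds.mul (hc.tendsto.comp (bvm_arg_tendsto ε s))
  have h := hnum.div (bvm_W_tendsto hm h0 hb hc ε) hL.ne'
  have hval : Real.exp (-s ^ 2 / 2) * pr θ₀ / (Real.sqrt (2 * Real.pi) * pr θ₀)
      = gaussianPDFReal 0 1 s := by
    rw [bvm_gauss_eq, mul_comm (Real.sqrt (2 * Real.pi)) (pr θ₀), mul_comm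
      (Real.exp (-s ^ 2 / 2)) (pr θ₀), mul_div_mul_left _ _ hp.ne']
  rwa [hval] at h

private lemma bvm_D_tendsto (hm : Measurable pr) (h0 : ∀ x, 0 ≤ pr x) (hb : ∀ x, pr x ≤ Cb)
    (hc : ContinuousAt pr θ₀) (hp : 0 < pr θ₀) (ε : ℝ) :
    Filter.Tendsto (fun n : ℕ => bvmD pr θ₀ n ε) Filter.atTop (nhds 0) := by
  set L : ℝ := Real.sqrt (2 * Real.pi) * pr θ₀ with hLdef
  have hL : (0:ℝ) < L := mul_pos (Real.sqrt_pos.2 (by positivity)) hp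
  have hφ_int := integrable_gaussianPDFReal 0 1
  have hWev : ∀ᶠ n : ℕ in Filter.atTop, L / 2 < bvmW pr θ₀ n ε :=
    (bvm_W_tendsto hm h0 hb hc ε).eventually_const_lt (by linarith)
  have hres := tendsto_integral_filter_of_dominated_convergence
    (μ := volume) (l := Filter.atTop) (F := fun (n : ℕ) (s : ℝ) => |bvmG pr θ₀ n ε s - gaussianPDFReal 0 1 s|)
    (f := fun _ => (0:ℝ))
    (bound := fun s => Cb * Real.exp (-s ^ 2 / 2) / (L / 2) + gaussianPDFReal 0 1 s)
    (Filter.Eventually.of_forall fun n =>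
      (((bvm_G_meas hm n ε).sub (measurable_gaussianPDFReal 0 1)).abs).aestronglyMeasurable)
    ?_ ?_ ?_
  · simpa [bvmD] using hres
  · refine hWev.mono fun n hn => ae_of_all _ fun s => ?_
    rw [Real.norm_eq_abs, abs_abs]
    have h1 : |bvmG pr θ₀ n ε s - gaussianPDFReal 0 1 s|
        ≤ bvmG pr θ₀ n ε s + gaussianPDFReal 0 1 s := by
      refine (abs_sub _ _).trans ?_
      rw [abs_of_nonneg (bvm_G_nonneg h0 n ε s),
        abs_of_nonneg (gaussianPDFReal_nonneg 0 1 s)]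
    have hCb : 0 < Cb := lt_of_lt_of_le hp (hb θ₀)
    have h2 : bvmG pr θ₀ n ε s ≤ Cb * Real.exp (-s ^ 2 / 2) / (L / 2) := by
      rw [bvmG]
      refine div_le_div₀ (by positivity) ?_ (by positivity) hn.le
      calc Real.exp (-s ^ 2 / 2) * pr (θ₀ + (ε + s) / Real.sqrt n)
          ≤ Real.exp (-s ^ 2 / 2) * Cb :=
            mul_le_mul_of_nonneg_left (hb _) (Real.exp_pos _).le
        _ = Cb * Real.exp (-s ^ 2 / 2) := mul_comm _ _
    exact h1.trans (add_le_add h2 le_rfl)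
  · exact ((bvm_e_int.const_mul Cb).div_const _).add hφ_int
  · refine ae_of_all _ fun s => ?_
    have := (bvm_G_tendsto hm h0 hb hc hp ε s).sub
      (tendsto_const_nhds (x := gaussianPDFReal 0 1 s))
    simpa using this.abs

end BvMAux

theorem parametric_BvM (π : ℝ → ℝ) (θ₀ Cb : ℝ)
    (hπ_meas : Measurable π) (hπ_nonneg : ∀ x, 0 ≤ π x)
    (hπ_prob : (∫ x : ℝ, π x) = 1)
    (hπ_bdd : ∀ x, π x ≤ Cb)
    (hπ_cont : ContinuousAt π θ₀) (hπ_pos : 0 < π θ₀) :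
    ∀ η : ℝ, 0 < η →
      Filter.Tendsto (fun n : ℕ =>
          gaussianReal 0 1 {ε : ℝ | η < tvDist
            (Measure.map (fun θ => Real.sqrt n * (θ - (θ₀ + ε / Real.sqrt n)))
              (posterior π n (θ₀ + ε / Real.sqrt n)))
            (gaussianReal 0 1)})
        Filter.atTop (nhds 0) := by
  intro η hη
  set S : ℕ → Set ℝ := fun n => {ε | η < bvmD π θ₀ n ε} with hS
  have hSmeas : ∀ n, MeasurableSet (S n) := fun n =>
    measurableSet_lt measurable_const (bvm_D_meas hπ_meas n)
  have hS0 : Filter.Tendsto (fun n => gaussianReal 0 1 (S n)) Filter.atTop (nhds 0) := by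
    have h := tendsto_lintegral_of_dominated_convergence (μ := gaussianReal 0 1)
      (F := fun n => (S n).indicator fun _ => (1 : ENNReal)) (f := fun _ => 0)
      (bound := fun _ => 1)
      (fun n => measurable_const.indicator (hSmeas n))
      (fun n => ae_of_all _ fun ε => by
        by_cases hε : ε ∈ S n <;> simp [hε])
      (by simp)
      (ae_of_all _ fun ε => by
        have hev : ∀ᶠ n in Filter.atTop, ε ∉ S n := by
          have hd := (bvm_D_tendsto hπ_meas hπ_nonneg hπ_bdd hπ_cont hπ_pos ε).eventually_lt_const hη
          exact hd.mono fun n hn => by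
            simp only [hS, Set.mem_setOf_eq]
            exact not_lt.2 hn.le
        exact tendsto_const_nhds.congr'
          (hev.mono fun n hn => (Set.indicator_of_notMem hn _).symm))
    have heq : ∀ n, (∫⁻ ε, (S n).indicator (fun _ => (1 : ENNReal)) ε ∂gaussianReal 0 1)
        = gaussianReal 0 1 (S n) := fun n => lintegral_indicator_one (hSmeas n)
    simp only [heq, lintegral_zero] at h
    exact h
  refine tendsto_of_tendsto_of_tendsto_of_le_of_le' tendsto_const_nhds hS0 ?_ ?_
  · exact Filter.Eventually.of_forall fun n => zero_le
  · refine Filter.eventually_atTop.2 ⟨1, fun n hn => ?_⟩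
    refine measure_mono fun ε hε => ?_
    exact lt_of_lt_of_le hε (bvm_tv_le hπ_meas hπ_nonneg hπ_bdd hn ε)
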